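/- Let G be a finite bipartite simple graph with parts L and R, where every vertex of L has capacity 1 and each vertex r ∈ R has capacity C(r) ∈ ℤ_{>0}, and let S and O be capacitated matchings. If every edge of O either shares its left endpoint with some edge of S, or has right endpoint r such that the number of edges of S incident to r is at least C(r)/2, then |O| ≤ 3·|S|. -/

import Mathlib

open Finset

/-- A finite bipartite simple graph presented via an abstract edge type: each
edge has a left endpoint in `L` and a right endpoint in `R`, and distinct
edges have distinct endpoint pairs. -/
structure BipGraph (L R E : Type) where
  endL : E → L
  endR : E → R
  edge_injective : Function.Injective fun e => (endL e, endR e)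

/-- A capacitated matching in the many-to-one bipartite setting: each left
vertex is incident to at most one edge, and each right vertex `r` to at most
`C r` edges. -/
def BipGraph.IsCapMatching {L R E : Type} [DecidableEq L] [DecidableEq R]
    (G : BipGraph L R E) (C : R → ℕ) (M : Finset E) : Prop :=
  (∀ l : L, (M.filter (fun e => G.endL e = l)).card ≤ 1) ∧
  (∀ r : R, (M.filter (fun e => G.endR e = r)).card ≤ C r)

/-- In the many-to-one bipartite setting, if every edge of a
capacitated matching `O` either shares its left endpoint with an edge of the
capacitated matching `S`, or has a right endpoint `r` whose `S`-degree is at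
least `C r / 2`, then `|O| ≤ 3|S|`. -/
theorem manyToOne_charging
    {L R E : Type} [DecidableEq L] [DecidableEq R] [DecidableEq E]
    (G : BipGraph L R E) (C : R → ℕ) (hC : ∀ r, 0 < C r)
    (S O : Finset E)
    (hS : G.IsCapMatching C S) (hO : G.IsCapMatching C O)
    (h : ∀ e ∈ O, (∃ f ∈ S, G.endL f = G.endL e) ∨
        C (G.endR e) ≤ 2 * (S.filter (fun f => G.endR f = G.endR e)).card) :
    O.card ≤ 3 * S.card := by
  classical
  set P : E → Prop := fun e => ∃ f ∈ S, G.endL f = G.endL e with hP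
  set O1 := O.filter (fun e => P e) with hO1
  set O2 := O.filter (fun e => ¬ P e) with hO2
  have hsplit : O.card = O1.card + O2.card :=
    (Finset.card_filter_add_card_filter_not (fun e => P e)).symm
  -- Bound O1 by |S|
  have h1 : O1.card ≤ S.card := by
    have : ∀ e ∈ O1, ∃ f ∈ S, G.endL f = G.endL e := by
      intro e he
      exact (Finset.mem_filter.mp he).2
    choose g hg1 hg2 using this
    apply Finset.card_le_card_of_injOn (fun e => if he : e ∈ O1 then g e he else e)
    · intro e he
      simp only [he, dif_pos]
      rw [dif_pos (by simpa using he)]; exact hg1 _ _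
    · intro e he e' he' heq
      simp only [Finset.mem_coe] at he he'
      simp only [he, he', dif_pos] at heq
      have hL : G.endL e = G.endL e' := by
        rw [← hg2 e he, heq, hg2 e' he']
      have hcard := hO.1 (G.endL e)
      have hmem : e ∈ O.filter (fun x => G.endL x = G.endL e) := by
        refine Finset.mem_filter.mpr ⟨(Finset.mem_filter.mp he).1, rfl⟩
      have hmem' : e' ∈ O.filter (fun x => G.endL x = G.endL e) := by
        refine Finset.mem_filter.mpr ⟨(Finset.mem_filter.mp he').1, hL.symm⟩
      exact Finset.card_le_one.mp hcard e hmem e' hmem'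
  -- Bound O2 by 2|S|
  have h2 : O2.card ≤ 2 * S.card := by
    set T := O2.image G.endR with hT
    have hfib : O2.card = ∑ r ∈ T, (O2.filter (fun e => G.endR e = r)).card :=
      Finset.card_eq_sum_card_fiberwise (fun e he => Finset.mem_image_of_mem _ he)
    have hbound : ∀ r ∈ T, (O2.filter (fun e => G.endR e = r)).card ≤
        2 * (S.filter (fun f => G.endR f = r)).card := by
      intro r hr
      obtain ⟨e, he, hre⟩ := Finset.mem_image.mp hr
      have heO : e ∈ O := (Finset.mem_filter.mp he).1
      have hnP : ¬ P e := (Finset.mem_filter.mp he).2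
      have hCb : C (G.endR e) ≤ 2 * (S.filter (fun f => G.endR f = G.endR e)).card :=
        (h e heO).resolve_left hnP
      calc (O2.filter (fun e => G.endR e = r)).card
          ≤ (O.filter (fun e => G.endR e = r)).card := by
            apply Finset.card_le_card
            exact Finset.filter_subset_filter _ (Finset.filter_subset _ _)
        _ ≤ C r := hO.2 r
        _ ≤ 2 * (S.filter (fun f => G.endR f = r)).card := by
            rw [← hre]; exact hCb
    calc O2.card ≤ ∑ r ∈ T, 2 * (S.filter (fun f => G.endR f = r)).card := by
          rw [hfib]; exact Finset.sum_le_sum hbound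
      _ = 2 * ∑ r ∈ T, (S.filter (fun f => G.endR f = r)).card := by
          rw [Finset.mul_sum]
      _ ≤ 2 * S.card := by
          apply Nat.mul_le_mul_left
          have : ∑ r ∈ T, (S.filter (fun f => G.endR f = r)).card =
              (S.filter (fun f => G.endR f ∈ T)).card := by
            rw [Finset.card_eq_sum_card_fiberwise
              (fun f hf => (Finset.mem_filter.mp hf).2 : ∀ f ∈ S.filter (fun f => G.endR f ∈ T), G.endR f ∈ T)]
            apply Finset.sum_congr rfl
            intro r hr
            congr 1
            rw [Finset.filter_filter]
            apply Finset.filter_congr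
            intro f hf
            constructor
            · intro hfr; exact ⟨by rw [hfr]; exact hr, hfr⟩
            · exact fun hx => hx.2
          rw [this]
          exact Finset.card_le_card (Finset.filter_subset _ _)
  omega
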